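/- Let d ≥ 3 and k ≥ 1 be integers, let x_min > 0 be a real, let x be a real with k·x_min ≤ x < (k+1)·x_min, and let π₀ be a real with π₀ ≥ d·G(k) + 2k − 1, where G(m) = (d^m − 1)/(d − 1). For natural numbers d_0, d_1, …, d_k with Σ_{j=0}^k d_j = d, define U(d_0, …, d_k) = Q/W where Q = x + Σ_{j=1}^k d_j·G(j)·(x − (j−1)·x_min) and W = π₀ + 1 + Σ_{j=1}^k d_j·G(j). Then for every tuple (d_0, …, d_k) of naturals with Σ_{j=0}^k d_j = d that is different from (0, …, 0, d), one has U(d_0, …, d_k) < U(0, …, 0, d). In other words, U is uniquely maximized by the full propagation strategy d_k = d, d_j = 0 for j < k. -/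

import Mathlib

/-- Number of nodes in the first `m` levels of a complete `d`-ary tree. -/
noncomputable def G (d m : ℕ) : ℝ := ((d : ℝ) ^ m - 1) / ((d : ℝ) - 1)

/-- Utility `Q / W` of the root player on a complete `d`-ary tree when she plays the
reasonable strategy `(dv 0, …, dv k)` and all her descendants fully propagate. -/
noncomputable def U (d k : ℕ) (xmin x π₀ : ℝ) (dv : ℕ → ℕ) : ℝ :=
  (x + ∑ j ∈ Finset.Icc 1 k, (dv j : ℝ) * G d j * (x - ((j : ℝ) - 1) * xmin)) /
    (π₀ + 1 + ∑ j ∈ Finset.Icc 1 k, (dv j : ℝ) * G d j)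

lemma aux1 (d : ℝ) (hd : 3 ≤ d) (m : ℕ) : 2 * (m : ℝ) ≤ d ^ m - 1 := by
  induction m with
  | zero => simp
  | succ n ih =>
    have h1 : (1:ℝ) ≤ d ^ n := one_le_pow₀ (by linarith)
    push_cast
    rw [pow_succ]
    nlinarith

lemma aux2 (d j k : ℕ) (hd : 3 ≤ d) (hjk : j ≤ k) :
    2 * G d j * ((k:ℝ) - (j:ℝ)) + G d j ≤ G d k := by
  have hd3 : (3:ℝ) ≤ (d:ℝ) := by exact_mod_cast hd
  have he : (0:ℝ) < (d:ℝ) - 1 := by linarith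
  obtain ⟨m, rfl⟩ := Nat.exists_eq_add_of_le hjk
  have hcast : ((j + m : ℕ):ℝ) - (j:ℝ) = (m:ℝ) := by push_cast; ring
  rw [hcast]
  unfold G
  rw [show 2 * (((d:ℝ)^j - 1)/((d:ℝ)-1)) * (m:ℝ) + ((d:ℝ)^j - 1)/((d:ℝ)-1)
      = (2 * ((d:ℝ)^j - 1) * (m:ℝ) + ((d:ℝ)^j - 1)) / ((d:ℝ)-1) by ring]
  rw [div_le_div_iff_of_pos_right he, pow_add]
  have h2m := aux1 (d:ℝ) hd3 m
  have h1 : (1:ℝ) ≤ (d:ℝ) ^ j := one_le_pow₀ (by linarith)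
  nlinarith [mul_le_mul_of_nonneg_left h2m (by linarith : (0:ℝ) ≤ (d:ℝ)^j - 1),
    mul_nonneg (by linarith : (0:ℝ) ≤ (d:ℝ)^j - 1) (by linarith : (0:ℝ) ≤ (d:ℝ)^m - 1)]

lemma aux2s (d j k : ℕ) (hd : 3 ≤ d) (hj : 1 ≤ j) (hjk : j < k) :
    2 * G d j * ((k:ℝ) - (j:ℝ)) + G d j < G d k := by
  have hd3 : (3:ℝ) ≤ (d:ℝ) := by exact_mod_cast hd
  have he : (0:ℝ) < (d:ℝ) - 1 := by linarith
  obtain ⟨m, rfl⟩ := Nat.exists_eq_add_of_le hjk.le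
  have hm : 1 ≤ m := by omega
  have hm1 : (1:ℝ) ≤ (m:ℝ) := by exact_mod_cast hm
  have hcast : ((j + m : ℕ):ℝ) - (j:ℝ) = (m:ℝ) := by push_cast; ring
  rw [hcast]
  unfold G
  rw [show 2 * (((d:ℝ)^j - 1)/((d:ℝ)-1)) * (m:ℝ) + ((d:ℝ)^j - 1)/((d:ℝ)-1)
      = (2 * ((d:ℝ)^j - 1) * (m:ℝ) + ((d:ℝ)^j - 1)) / ((d:ℝ)-1) by ring]
  rw [div_lt_div_iff_of_pos_right he, pow_add]
  have h2m := aux1 (d:ℝ) hd3 m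
  have h1 : (1:ℝ) < (d:ℝ) ^ j := one_lt_pow₀ (by linarith) (by omega)
  nlinarith [mul_le_mul_of_nonneg_left h2m (by positivity : (0:ℝ) ≤ (d:ℝ)^j),
    mul_lt_mul_of_pos_right h1 (by linarith : (0:ℝ) < 2 * (m:ℝ))]

lemma Gnn (d : ℕ) (hd : 3 ≤ d) (j : ℕ) : 0 ≤ G d j := by
  have hd3 : (3:ℝ) ≤ (d:ℝ) := by exact_mod_cast hd
  have h1 : (1:ℝ) ≤ (d:ℝ) ^ j := one_le_pow₀ (by linarith)
  unfold G
  apply div_nonneg <;> linarith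

lemma Gpos (d k : ℕ) (hd : 3 ≤ d) (hk : 1 ≤ k) : 0 < G d k := by
  have hd3 : (3:ℝ) ≤ (d:ℝ) := by exact_mod_cast hd
  have h1 : (1:ℝ) < (d:ℝ) ^ k := one_lt_pow₀ (by linarith) (by omega)
  unfold G
  apply div_pos <;> linarith

set_option maxHeartbeats 1000000 in
/-- Corollary 1 of the paper: the root's utility is uniquely maximized by full
propagation, i.e. `dv k = d` and `dv j = 0` for `j < k`. -/
theorem stmt_13 (d k : ℕ) (hd : 3 ≤ d) (hk : 1 ≤ k)
    (xmin x π₀ : ℝ) (hxmin : 0 < xmin)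
    (hx1 : (k : ℝ) * xmin ≤ x) (hx2 : x < ((k : ℝ) + 1) * xmin)
    (hπ : (d : ℝ) * G d k + 2 * (k : ℝ) - 1 ≤ π₀) :
    ∀ dv : ℕ → ℕ, (∑ j ∈ Finset.range (k + 1), dv j = d) →
      ¬(dv k = d ∧ ∀ j < k, dv j = 0) →
      U d k xmin x π₀ dv < U d k xmin x π₀ (fun j => if j = k then d else 0) := by
  intro dv hsum hne
  have hd3 : (3:ℝ) ≤ (d:ℝ) := by exact_mod_cast hd
  have hk1 : (1:ℝ) ≤ (k:ℝ) := by exact_mod_cast hk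
  have hGnn := Gnn d hd
  have hGk : 0 < G d k := Gpos d k hd hk
  -- witness of non-full propagation
  have hj0 : ∃ j0, j0 < k ∧ dv j0 ≠ 0 := by
    by_contra h
    push_neg at h
    apply hne
    have hz : ∀ j < k, dv j = 0 := h
    refine ⟨?_, hz⟩
    rw [Finset.sum_range_succ] at hsum
    rw [Finset.sum_eq_zero (fun j hj => hz j (Finset.mem_range.mp hj))] at hsum
    omega
  obtain ⟨j0, hj0k, hj0ne⟩ := hj0
  -- abbreviations
  set g : ℝ := G d k with hg
  set S : ℝ := ∑ j ∈ Finset.Icc 1 k, (dv j : ℝ) * G d j with hSdef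
  set T : ℝ := ∑ j ∈ Finset.Icc 1 k, (dv j : ℝ) * G d j * ((k:ℝ) - (j:ℝ)) with hTdef
  have hS_nn : 0 ≤ S := Finset.sum_nonneg fun j _ =>
    mul_nonneg (Nat.cast_nonneg _) (hGnn j)
  have hT_nn : 0 ≤ T := Finset.sum_nonneg fun j hj => by
    have hjk : j ≤ k := (Finset.mem_Icc.mp hj).2
    have : (j:ℝ) ≤ (k:ℝ) := by exact_mod_cast hjk
    exact mul_nonneg (mul_nonneg (Nat.cast_nonneg _) (hGnn j)) (by linarith)
  -- decompose Q sum
  have hQ : ∑ j ∈ Finset.Icc 1 k, (dv j : ℝ) * G d j * (x - ((j:ℝ) - 1) * xmin)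
      = S * (x - ((k:ℝ) - 1) * xmin) + T * xmin := by
    rw [hSdef, hTdef, Finset.sum_mul, Finset.sum_mul, ← Finset.sum_add_distrib]
    apply Finset.sum_congr rfl
    intro j _
    ring
  -- split d into dv 0 + rest
  have hsplit : (d:ℝ) * g = (dv 0 : ℝ) * g + ∑ j ∈ Finset.Icc 1 k, (dv j : ℝ) * g := by
    have h1 : ((d:ℕ):ℝ) = ∑ j ∈ Finset.range (k+1), (dv j : ℝ) := by
      rw [← hsum]; push_cast; ring
    have h2 : ∑ j ∈ Finset.range (k+1), (dv j : ℝ)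
        = (dv 0 : ℝ) + ∑ j ∈ Finset.Icc 1 k, (dv j : ℝ) := by
      rw [Finset.range_eq_Ico, Finset.sum_eq_sum_Ico_succ_bot (by omega),
        Finset.Ico_add_one_right_eq_Icc]
    rw [h1, h2, add_mul, Finset.sum_mul]
  -- key inequality: 2T + S < d * g
  have hD : 2 * T + S < (d:ℝ) * g := by
    have hpt : ∀ j ∈ Finset.Icc 1 k,
        (dv j : ℝ) * (G d j * (2 * ((k:ℝ) - (j:ℝ))) + G d j) ≤ (dv j : ℝ) * g := by
      intro j hj
      have hjk := (Finset.mem_Icc.mp hj).2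
      have := aux2 d j k hd hjk
      have hnn : (0:ℝ) ≤ (dv j : ℝ) := Nat.cast_nonneg _
      nlinarith
    have hmain : ∑ j ∈ Finset.Icc 1 k, (dv j : ℝ) * (G d j * (2 * ((k:ℝ) - (j:ℝ))) + G d j)
        < (dv 0 : ℝ) * g + ∑ j ∈ Finset.Icc 1 k, (dv j : ℝ) * g := by
      rcases Nat.eq_zero_or_pos j0 with h0 | h0
      · -- dv 0 > 0
        subst h0
        have hc0 : (0:ℝ) < (dv 0 : ℝ) := by
          have : 0 < dv 0 := by omega
          exact_mod_cast this
        have := Finset.sum_le_sum hpt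
        nlinarith [mul_pos hc0 hGk]
      · -- 1 ≤ j0 < k with dv j0 > 0
        have hmem : j0 ∈ Finset.Icc 1 k := Finset.mem_Icc.mpr ⟨h0, hj0k.le⟩
        have hlt : ∑ j ∈ Finset.Icc 1 k, (dv j : ℝ) * (G d j * (2 * ((k:ℝ) - (j:ℝ))) + G d j)
            < ∑ j ∈ Finset.Icc 1 k, (dv j : ℝ) * g := by
          apply Finset.sum_lt_sum hpt
          refine ⟨j0, hmem, ?_⟩
          have := aux2s d j0 k hd h0 hj0k
          have hc : (0:ℝ) < (dv j0 : ℝ) := by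
            have : 0 < dv j0 := by omega
            exact_mod_cast this
          nlinarith
        nlinarith [mul_nonneg (Nat.cast_nonneg (dv 0) : (0:ℝ) ≤ (dv 0:ℝ)) hGk.le]
    rw [hsplit]
    calc 2 * T + S
        = ∑ j ∈ Finset.Icc 1 k, (dv j : ℝ) * (G d j * (2 * ((k:ℝ) - (j:ℝ))) + G d j) := by
          rw [hTdef, hSdef, Finset.mul_sum, ← Finset.sum_add_distrib]
          apply Finset.sum_congr rfl
          intro j _
          ring
      _ < _ := hmain
  -- positivity of denominators
  have hA : (d:ℝ) * g + 2 * (k:ℝ) ≤ π₀ + 1 := by linarith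
  have hdg_nn : 0 ≤ (d:ℝ) * g := by positivity
  have hApos : 0 < π₀ + 1 := by linarith
  have hW : 0 < π₀ + 1 + S := by linarith
  have hWs : 0 < π₀ + 1 + (d:ℝ) * g := by linarith
  -- full propagation sums
  have hSfull : ∑ j ∈ Finset.Icc 1 k, ((if j = k then d else 0 : ℕ) : ℝ) * G d j
      = (d:ℝ) * g := by
    rw [Finset.sum_eq_single_of_mem k (Finset.mem_Icc.mpr ⟨hk, le_refl k⟩)]
    · simp [hg]
    · intro b _ hb
      simp [hb]
  have hQfull : ∑ j ∈ Finset.Icc 1 k, ((if j = k then d else 0 : ℕ) : ℝ) * G d j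
        * (x - ((j:ℝ) - 1) * xmin)
      = (d:ℝ) * g * (x - ((k:ℝ) - 1) * xmin) := by
    rw [Finset.sum_eq_single_of_mem k (Finset.mem_Icc.mpr ⟨hk, le_refl k⟩)]
    · simp [hg]
    · intro b _ hb
      simp [hb]
  -- main inequality
  unfold U
  rw [hQ, hSfull, hQfull, div_lt_div_iff₀ hW hWs]
  have h2 : xmin * ((π₀ + 1) + (d:ℝ) * g) ≤
      2 * ((π₀ + 1) * (x - ((k:ℝ) - 1) * xmin) - x) := by
    nlinarith [mul_nonneg (by linarith : (0:ℝ) ≤ 2 * (π₀ + 1) - 2)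
        (by linarith : (0:ℝ) ≤ x - (k:ℝ) * xmin),
      mul_nonneg (by linarith : (0:ℝ) ≤ π₀ + 1 - 2 * (k:ℝ) - (d:ℝ) * g) hxmin.le]
  have hE : 0 < (π₀ + 1) * (x - ((k:ℝ) - 1) * xmin) - x := by
    nlinarith [mul_pos hxmin hWs]
  have h3 : T * (xmin * ((π₀ + 1) + (d:ℝ) * g)) ≤
      T * (2 * ((π₀ + 1) * (x - ((k:ℝ) - 1) * xmin) - x)) :=
    mul_le_mul_of_nonneg_left h2 hT_nn
  have h4 : (2 * T) * ((π₀ + 1) * (x - ((k:ℝ) - 1) * xmin) - x)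
      < ((d:ℝ) * g - S) * ((π₀ + 1) * (x - ((k:ℝ) - 1) * xmin) - x) :=
    mul_lt_mul_of_pos_right (by linarith) hE
  linarith [h3, h4]
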